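/- Let β ∈ (0,1) be a real number, n ≥ 1 and N natural numbers, x : Fin n → Fin N → Bool the experts' predictions, and c : Fin N → Bool the correct labels. For an expert i and a time t ≤ N, let mist i t denote the number of trials j < t with x i j ≠ c j, let w i t = β^(mist i t), let W t = ∑_{i} w i t, and let F t = (∑_{i : x i t ≠ c t} w i t) / W t. Then for every expert k, n * ∏_{t < N} (1 - (1-β) * F t) ≥ β^(mist k N). -/

import Mathlib

/-- Number of mistakes expert `i` made during the first `t` trials. -/
def mist {n N : ℕ} (x : Fin n → Fin N → Bool) (c : Fin N → Bool)
    (i : Fin n) (t : ℕ) : ℕ :=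
  (Finset.univ.filter (fun j : Fin N => (j : ℕ) < t ∧ x i j ≠ c j)).card

/-- Weight of expert `i` just before trial `t`. -/
noncomputable def w (β : ℝ) {n N : ℕ} (x : Fin n → Fin N → Bool) (c : Fin N → Bool)
    (i : Fin n) (t : ℕ) : ℝ :=
  β ^ (mist x c i t)

/-- Total weight just before trial `t`. -/
noncomputable def W (β : ℝ) {n N : ℕ} (x : Fin n → Fin N → Bool) (c : Fin N → Bool)
    (t : ℕ) : ℝ :=
  ∑ i : Fin n, w β x c i t

/-- Fraction of the total weight placed on the wrong answer at trial `t`. -/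
noncomputable def F (β : ℝ) {n N : ℕ} (x : Fin n → Fin N → Bool) (c : Fin N → Bool)
    (t : Fin N) : ℝ :=
  (∑ i ∈ Finset.univ.filter (fun i : Fin n => x i t ≠ c t), w β x c i (t : ℕ)) /
    W β x c (t : ℕ)

lemma mist_succ {n N : ℕ} (x : Fin n → Fin N → Bool) (c : Fin N → Bool)
    (i : Fin n) (t : ℕ) (ht : t < N) :
    mist x c i (t + 1) =
      mist x c i t + (if x i ⟨t, ht⟩ ≠ c ⟨t, ht⟩ then 1 else 0) := by
  unfold mist
  have h2 : (if x i ⟨t, ht⟩ ≠ c ⟨t, ht⟩ then 1 else 0) =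
      (Finset.univ.filter (fun j : Fin N => j = ⟨t, ht⟩ ∧ x i j ≠ c j)).card := by
    split_ifs with h
    · have : Finset.univ.filter (fun j : Fin N => j = ⟨t, ht⟩ ∧ x i j ≠ c j) =
          {⟨t, ht⟩} := by
        ext j
        simp only [Finset.mem_filter, Finset.mem_singleton, Finset.mem_univ, true_and]
        constructor
        · exact fun hj => hj.1
        · rintro rfl; exact ⟨rfl, h⟩
      rw [this, Finset.card_singleton]
    · push_neg at h
      symm
      rw [Finset.card_eq_zero, Finset.filter_eq_empty_iff]
      rintro j _ ⟨rfl, hj⟩; exact hj h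
  rw [h2, ← Finset.card_union_of_disjoint, ← Finset.filter_or]
  · congr 1
    apply Finset.filter_congr
    intro j _
    have : (j : ℕ) < t + 1 ↔ (j : ℕ) < t ∨ j = ⟨t, ht⟩ := by
      rw [Fin.ext_iff]; simp only [Nat.lt_succ_iff_lt_or_eq]
    simp only [this, or_and_right]
  · rw [Finset.disjoint_filter]
    rintro j _ ⟨hj, -⟩ ⟨rfl, -⟩
    simp at hj

lemma W_pos (β : ℝ) (hβ0 : 0 < β) {n N : ℕ} (hn : 1 ≤ n)
    (x : Fin n → Fin N → Bool) (c : Fin N → Bool) (t : ℕ) :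
    0 < W β x c t := by
  have : Nonempty (Fin n) := Fin.pos_iff_nonempty.mp hn
  exact Finset.sum_pos (fun i _ => pow_pos hβ0 _) Finset.univ_nonempty

lemma W_succ (β : ℝ) (hβ0 : 0 < β) {n N : ℕ} (hn : 1 ≤ n)
    (x : Fin n → Fin N → Bool) (c : Fin N → Bool) (t : ℕ) (ht : t < N) :
    W β x c (t + 1) = W β x c t * (1 - (1 - β) * F β x c ⟨t, ht⟩) := by
  have hW := W_pos β hβ0 hn x c (t := t)
  set S := ∑ i ∈ Finset.univ.filter (fun i : Fin n => x i ⟨t, ht⟩ ≠ c ⟨t, ht⟩),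
    w β x c i t with hS
  have hrhs : W β x c t * (1 - (1 - β) * F β x c ⟨t, ht⟩) = W β x c t - (1 - β) * S := by
    unfold F
    field_simp
    rfl
  rw [hrhs]
  have hsplit : W β x c t = S +
      ∑ i ∈ Finset.univ.filter (fun i : Fin n => ¬(x i ⟨t, ht⟩ ≠ c ⟨t, ht⟩)),
        w β x c i t := by
    rw [hS]
    exact (Finset.sum_filter_add_sum_filter_not Finset.univ
      (fun i : Fin n => x i ⟨t, ht⟩ ≠ c ⟨t, ht⟩) _).symm
  have hlhs : W β x c (t + 1) = β * S +
      ∑ i ∈ Finset.univ.filter (fun i : Fin n => ¬(x i ⟨t, ht⟩ ≠ c ⟨t, ht⟩)),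
        w β x c i t := by
    rw [hS, Finset.mul_sum]
    unfold W
    rw [← Finset.sum_filter_add_sum_filter_not Finset.univ
      (fun i : Fin n => x i ⟨t, ht⟩ ≠ c ⟨t, ht⟩)]
    congr 1
    · apply Finset.sum_congr rfl
      intro i hi
      simp only [Finset.mem_filter] at hi
      unfold w
      rw [mist_succ x c i t ht, if_pos hi.2, pow_add, pow_one]
      ring
    · apply Finset.sum_congr rfl
      intro i hi
      simp only [Finset.mem_filter] at hi
      unfold w
      rw [mist_succ x c i t ht, if_neg hi.2, add_zero]
  rw [hlhs, hsplit]; ring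

theorem rwm_weight_lower_bound
    (β : ℝ) (hβ0 : 0 < β) (hβ1 : β < 1)
    (n N : ℕ) (hn : 1 ≤ n)
    (x : Fin n → Fin N → Bool) (c : Fin N → Bool)
    (k : Fin n) :
    (n : ℝ) * ∏ t : Fin N, (1 - (1 - β) * F β x c t) ≥ β ^ (mist x c k N) := by
  have key : ∀ t, t ≤ N →
      (n : ℝ) * ∏ j ∈ Finset.univ.filter (fun j : Fin N => (j : ℕ) < t),
        (1 - (1 - β) * F β x c j) = W β x c t := by
    intro t
    induction t with
    | zero =>
      intro _
      have : Finset.univ.filter (fun j : Fin N => (j : ℕ) < 0) = ∅ := by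
        rw [Finset.filter_eq_empty_iff]; intro j _; omega
      rw [this, Finset.prod_empty, mul_one]
      unfold W w
      have : ∀ i : Fin n, mist x c i 0 = 0 := by
        intro i
        unfold mist
        rw [Finset.card_eq_zero, Finset.filter_eq_empty_iff]
        intro j _; push_neg; intro h; omega
      simp [this]
    | succ t ih =>
      intro ht
      have ht' : t < N := ht
      have hfil : Finset.univ.filter (fun j : Fin N => (j : ℕ) < t + 1) =
          insert ⟨t, ht'⟩ (Finset.univ.filter (fun j : Fin N => (j : ℕ) < t)) := by
        ext j
        simp only [Finset.mem_filter, Finset.mem_insert, Finset.mem_univ, true_and,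
          Fin.ext_iff]
        omega
      rw [hfil, Finset.prod_insert (by simp), W_succ β hβ0 hn x c t ht',
        ← ih (le_of_lt ht')]
      ring
  have hfin : Finset.univ.filter (fun j : Fin N => (j : ℕ) < N) = Finset.univ := by
    rw [Finset.filter_true_of_mem]; intro j _; exact j.isLt
  have := key N le_rfl
  rw [hfin] at this
  rw [this]
  unfold W
  have : (β : ℝ) ^ (mist x c k N) = w β x c k N := rfl
  rw [this]
  exact Finset.single_le_sum (f := fun i => w β x c i N)
    (fun i _ => le_of_lt (pow_pos hβ0 _)) (Finset.mem_univ k)
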